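/- For any two chains C and D in a complemented modular lattice L of rank n, there exists a base {a₁,…,aₙ} of atoms such that the frame ⟨a₁,…,aₙ⟩ generated by it contains both C and D. -/

import Mathlib

open Order

section Aux

variable {L : Type*} [Lattice L] [IsModularLattice L]

set_option linter.unusedSectionVars false

/-- In a modular lattice, a covering step increases height by at most one
(chain surgery). -/
private lemma efc_height_covBy_le
    {a b : L} (h : a ⋖ b) : height b ≤ height a + 1 := by
  classical
  apply height_le
  intro p hp
  rcases Nat.eq_zero_or_pos p.length with hm0 | hmpos
  · simp [hm0]
  set m := p.length with hm
  set g : ℕ → L := fun i => p ⟨min i m, Nat.lt_succ_of_le (min_le_right i m)⟩ with hg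
  have hgeq : ∀ i, ∀ hi : i ≤ m, g i = p ⟨i, by omega⟩ := by
    intro i hi
    simp only [hg]
    congr 1
    exact Fin.ext (by simp [Nat.min_eq_left hi])
  have hglast : g m = b := by
    rw [hgeq m le_rfl, ← hp]
    rfl
  have hstrict : ∀ i j, i < j → j ≤ m → g i < g j := by
    intro i j hij hj
    rw [hgeq i (by omega), hgeq j hj]
    exact p.strictMono (by simpa using hij)
  have hgmono : ∀ i j, i ≤ j → j ≤ m → g i ≤ g j := by
    intro i j hij hj
    rcases eq_or_lt_of_le hij with rfl | hlt
    · exact le_rfl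
    · exact (hstrict i j hlt hj).le
  have hwit : ∃ i, ¬ g i ≤ a := ⟨m, by rw [hglast]; exact fun hba => h.lt.not_ge hba⟩
  set t := Nat.find hwit with ht
  have htspec : ¬ g t ≤ a := Nat.find_spec hwit
  have htle : t ≤ m := Nat.find_le (by rw [hglast]; exact fun hba => h.lt.not_ge hba)
  have hlt : ∀ i, i < t → g i ≤ a := fun i hi => not_not.mp (Nat.find_min hwit hi)
  have hnle : ∀ i, t ≤ i → i ≤ m → ¬ g i ≤ a := by
    intro i hti him hle
    exact htspec (le_trans (hgmono t i hti him) hle)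
  have hsup : ∀ i, t ≤ i → i ≤ m → g i ⊔ a = b := by
    intro i hti him
    have h1 : a < g i ⊔ a :=
      lt_of_le_of_ne le_sup_right (fun he => hnle i hti him (sup_eq_right.mp he.symm))
    have h2 : g i ⊔ a ≤ b := sup_le (by rw [← hglast]; exact hgmono i m him le_rfl) h.lt.le
    rcases h2.lt_or_eq with hl | he
    · exact absurd hl (h.2 h1)
    · exact he
  have hinf : ∀ i, t ≤ i → i + 1 ≤ m → g i ⊓ a < g (i+1) ⊓ a := by
    intro i hti him
    exact inf_lt_inf_of_lt_of_sup_le_sup (hstrict i (i+1) (by omega) him)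
      (by rw [hsup i hti (by omega), hsup (i+1) (by omega) him])
  set q : LTSeries L := RelSeries.mk (m-1)
    (fun j => if j.val < t then g j.val else g (j.val + 1) ⊓ a)
    (by
      intro j
      have hj : j.val < m - 1 := j.isLt
      simp only [Fin.coe_castSucc, Fin.val_succ]
      rcases lt_trichotomy (j.val + 1) t with h1 | h1 | h1
      · rw [if_pos (by omega), if_pos h1]
        exact hstrict _ _ (by omega) (by omega)
      · rw [if_pos (by omega), if_neg (by omega)]
        have hle1 : g j.val ≤ g (j.val+1) ⊓ a :=
          le_inf (hstrict _ _ (by omega) (by omega)).le (hlt _ (by omega))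
        exact lt_of_le_of_lt hle1 (hinf (j.val+1) (by omega) (by omega))
      · rw [if_neg (by omega), if_neg (by omega)]
        exact hinf (j.val+1) (by omega) (by omega)) with hq
  have hqlast : q.last ≤ a := by
    have hql : q.last = if m - 1 < t then g (m-1) else g (m-1+1) ⊓ a := rfl
    rw [hql]
    split
    · exact hlt _ ‹_›
    · exact inf_le_right
  have hlen : ((m - 1 : ℕ) : ℕ∞) ≤ height a :=
    le_trans (length_le_height_last (p := q)) (height_mono hqlast)
  have hmeq : ((p.length : ℕ) : ℕ∞) = ((m - 1 : ℕ) : ℕ∞) + 1 := by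
    rw [show p.length = (m-1)+1 from by omega]
    push_cast
    ring
  rw [hmeq]
  exact add_le_add_left hlen 1

/-- In a modular lattice, a covering step increases finite height by exactly one. -/
private lemma efc_height_covBy
    {a b : L} (h : a ⋖ b) (hfin : height a ≠ ⊤) : height b = height a + 1 := by
  refine le_antisymm (efc_height_covBy_le h) ?_
  rw [ENat.add_one_le_iff hfin]
  exact height_strictMono h.lt (lt_top_iff_ne_top.2 hfin)

variable [BoundedOrder L]

private lemma efc_height_ne_top {n : ℕ} (hrank : height (⊤:L) = n) (x : L) :
    height x ≠ ⊤ := by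
  intro hx
  have hb : height x ≤ (n : ℕ∞) := hrank ▸ height_mono le_top
  rw [hx] at hb
  simp at hb

private lemma efc_height_le {n : ℕ} (hrank : height (⊤:L) = n) (x : L) :
    height x ≤ (n : ℕ∞) := hrank ▸ height_mono le_top

/-- Existence of covers below a given element, in a finite-height lattice. -/
private lemma efc_exists_covBy_le {n : ℕ} (hrank : height (⊤:L) = n) {x y : L}
    (hxy : x < y) : ∃ z, x ⋖ z ∧ z ≤ y := by
  classical
  have hex : ∃ k : ℕ, ∃ z, x < z ∧ z ≤ y ∧ height z ≤ (k : ℕ∞) :=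
    ⟨n, y, hxy, le_rfl, efc_height_le hrank y⟩
  obtain ⟨z, hxz, hzy, hzk⟩ := Nat.find_spec hex
  refine ⟨z, ⟨hxz, ?_⟩, hzy⟩
  intro w hxw hwz
  have hwlt : height w < height z :=
    height_strictMono hwz (lt_top_iff_ne_top.2 (efc_height_ne_top hrank w))
  have hcoe : ((height w).toNat : ℕ∞) = height w := ENat.coe_toNat (efc_height_ne_top hrank w)
  have hlt' : ((height w).toNat : ℕ∞) < (Nat.find hex : ℕ∞) :=
    lt_of_lt_of_le (hcoe ▸ hwlt) hzk
  have : (height w).toNat < Nat.find hex := by exact_mod_cast hlt'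
  exact Nat.find_min hex this ⟨w, hxw, le_trans hwz.le hzy, hcoe.ge⟩

/-- Saturated (cover-by-cover) interpolation between two comparable elements. -/
private lemma efc_exists_sat_list {n : ℕ} (hrank : height (⊤:L) = n) :
    ∀ (k : ℕ) (x y : L), x ≤ y → height y ≤ height x + k →
    ∃ l : List L, l ≠ [] ∧ l.Chain' (· ⋖ ·) ∧ l.head? = some x ∧ l.getLast? = some y := by
  intro k
  induction k with
  | zero =>
    intro x y hxy hht
    have hxeqy : x = y := by
      rcases eq_or_lt_of_le hxy with rfl | hlt
      · rfl
      · exfalso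
        have := height_strictMono hlt (lt_top_iff_ne_top.2 (efc_height_ne_top hrank x))
        simp only [Nat.cast_zero, add_zero] at hht
        exact absurd hht (not_le.mpr this)
    exact ⟨[x], by simp, by simp [List.Chain'], by simp, by simp [hxeqy]⟩
  | succ k ih =>
    intro x y hxy hht
    rcases eq_or_lt_of_le hxy with rfl | hlt
    · exact ⟨[x], by simp, by simp [List.Chain'], by simp, by simp⟩
    · obtain ⟨z, hxz, hzy⟩ := efc_exists_covBy_le hrank hlt
      have hhz : height z = height x + 1 :=
        efc_height_covBy hxz (efc_height_ne_top hrank x)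
      have hht' : height y ≤ height z + k := by
        rw [hhz]
        calc height y ≤ height x + (k+1 : ℕ) := hht
          _ = height x + 1 + k := by push_cast; ring
      obtain ⟨l', hne, hch, hhd, hlast⟩ := ih z y hzy hht'
      refine ⟨x :: l', by simp, ?_, by simp, ?_⟩
      · refine List.isChain_cons.mpr ?_
        refine ⟨?_, hch⟩
        intro w hw
        rw [hhd] at hw
        obtain rfl : z = w := by simpa using hw
        exact hxz
      · cases l' with
        | nil => exact absurd rfl hne
        | cons b tl => rw [List.getLast?_cons_cons]; exact hlast

end Aux

section Chains

variable {L : Type*} [Lattice L] [BoundedOrder L] [IsModularLattice L]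

/-- Any finite chain (as a `Finset`) can be listed in strictly increasing order. -/
private lemma efc_exists_sorted_list (F : Finset L) (hF : IsChain (· ≤ ·) (F : Set L)) :
    ∃ s : List L, s.Chain' (· < ·) ∧ ∀ x, x ∈ s ↔ x ∈ F := by
  classical
  induction F using Finset.strongInduction with
  | _ F ih =>
    rcases F.eq_empty_or_nonempty with rfl | hne
    · exact ⟨[], by simp [List.Chain'], by simp⟩
    · obtain ⟨z, hz, hzmin⟩ := F.exists_minimal hne
      have hsub : ((F.erase z : Finset L) : Set L) ⊆ (F : Set L) := by
        intro w hw
        simp only [Finset.coe_erase, Set.mem_diff] at hw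
        exact hw.1
      obtain ⟨s', hs', hmem⟩ := ih (F.erase z) (Finset.erase_ssubset hz) (hF.mono hsub)
      have hzlt : ∀ w ∈ s', z < w := by
        intro w hw
        have hw' : w ∈ F.erase z := (hmem w).1 hw
        have hwF : w ∈ F := Finset.mem_of_mem_erase hw'
        have hwne : w ≠ z := Finset.ne_of_mem_erase hw'
        rcases hF hz hwF (Ne.symm hwne) with h1 | h1
        · exact lt_of_le_of_ne h1 (Ne.symm hwne)
        · exact absurd (lt_of_le_of_ne h1 hwne) (fun hlt => hlt.not_ge (hzmin hwF hlt.le))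
      refine ⟨z :: s', ?_, ?_⟩
      · refine List.isChain_cons.mpr ?_
        exact ⟨fun w hw => hzlt w (List.mem_of_mem_head? hw), hs'⟩
      · intro x
        simp only [List.mem_cons, hmem, Finset.mem_erase]
        constructor
        · rintro (rfl | ⟨-, hx⟩)
          · exact hz
          · exact hx
        · intro hx
          by_cases hxz : x = z
          · exact Or.inl hxz
          · exact Or.inr ⟨hxz, hx⟩

private lemma efc_head_le :
    ∀ (s : List L), s.Chain' (· < ·) → ∀ x ∈ s, ∀ h ∈ s.head?, h ≤ x := by
  intro s hs
  cases s with
  | nil => intro x hx; simp at hx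
  | cons a tl =>
    intro x hx h hh
    obtain rfl : a = h := by simpa using hh
    have hp := (List.isChain_iff_pairwise).1 hs
    rcases List.mem_cons.mp hx with rfl | hx'
    · exact le_rfl
    · exact ((List.pairwise_cons.mp hp).1 x hx').le

private lemma efc_le_getLast :
    ∀ (s : List L), s.Chain' (· < ·) → ∀ x ∈ s, ∀ y ∈ s.getLast?, x ≤ y := by
  intro s
  induction s with
  | nil => intro _ x hx; simp at hx
  | cons a tl ihl =>
    intro hs x hx y hy
    have hp := (List.isChain_iff_pairwise).1 hs
    cases tl with
    | nil =>
      obtain rfl : x = a := by simpa using hx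
      obtain rfl : x = y := by simpa using hy
      exact le_rfl
    | cons b tl' =>
      rw [List.getLast?_cons_cons] at hy
      have hch : (b :: tl').Chain' (· < ·) := (List.isChain_cons.mp hs).2
      rcases List.mem_cons.mp hx with rfl | hx'
      · have hyb : y ∈ b :: tl' := List.mem_of_mem_getLast? hy
        exact ((List.pairwise_cons.mp hp).1 y hyb).le
      · exact ihl hch x hx' y hy

/-- Interpolate a sorted list into a saturated (cover) chain containing it. -/
private lemma efc_chain_to_sat {n : ℕ} (hrank : height (⊤:L) = n) :
    ∀ s : List L, s.Chain' (· < ·) → s ≠ [] →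
    ∃ l : List L, l ≠ [] ∧ l.Chain' (· ⋖ ·) ∧ l.head? = s.head? ∧
      l.getLast? = s.getLast? ∧ ∀ x ∈ s, x ∈ l := by
  intro s
  induction s with
  | nil => intro _ h; exact absurd rfl h
  | cons x s ihs =>
    intro hs _
    cases s with
    | nil => exact ⟨[x], by simp, by simp [List.Chain'], by simp, by simp, by simp⟩
    | cons y rest =>
      have hxy : x < y := (List.isChain_cons_cons.mp hs).1
      have hs' : (y :: rest).Chain' (· < ·) := (List.isChain_cons_cons.mp hs).2
      obtain ⟨l₁, hl₁ne, hl₁ch, hl₁hd, hl₁last⟩ :=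
        efc_exists_sat_list hrank n x y hxy.le
          (le_trans (efc_height_le hrank y) le_add_self)
      obtain ⟨l₂, hl₂ne, hl₂ch, hl₂hd, hl₂last, hl₂mem⟩ := ihs hs' (by simp)
      have hl₂hd' : l₂.head? = some y := by rw [hl₂hd]; simp
      have hex2 : ∃ t, l₂ = y :: t := by
        cases l₂ with
        | nil => exact absurd rfl hl₂ne
        | cons a t =>
          simp only [List.head?_cons, Option.some_inj] at hl₂hd'
          exact ⟨t, by simp [hl₂hd']⟩
      obtain ⟨l₂', rfl⟩ := hex2
      refine ⟨l₁ ++ l₂', ?_, ?_, ?_, ?_, ?_⟩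
      · simp [hl₁ne]
      · refine List.IsChain.append hl₁ch ((List.isChain_cons.mp hl₂ch).2) ?_
        intro u hu v hv
        obtain rfl : y = u := by
          rw [hl₁last] at hu; simpa using hu
        exact (List.isChain_cons.mp hl₂ch).1 v hv
      · rw [List.head?_append_of_ne_nil _ hl₁ne, hl₁hd]
        simp
      · cases l₂' with
        | nil =>
          simp only [List.append_nil]
          rw [hl₁last, show (x :: y :: rest).getLast? = (y :: rest).getLast? from
            List.getLast?_cons_cons, ← hl₂last]
          simp
        | cons b tl =>
          rw [List.getLast?_append_of_ne_nil l₁ (by simp),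
            show (x :: y :: rest).getLast? = (y :: rest).getLast? from
              List.getLast?_cons_cons, ← hl₂last,
            show (y :: b :: tl).getLast? = (b :: tl).getLast? from
              List.getLast?_cons_cons]
      · intro w hw
        rcases List.mem_cons.mp hw with rfl | hw'
        · exact List.mem_append.mpr (Or.inl (List.mem_of_mem_head? (by rw [hl₁hd]; simp)))
        · have hw₂ : w ∈ y :: l₂' := hl₂mem w hw'
          rcases List.mem_cons.mp hw₂ with rfl | hw₂'
          · exact List.mem_append.mpr (Or.inl (List.mem_of_mem_getLast? (by rw [hl₁last]; simp)))
          · exact List.mem_append.mpr (Or.inr hw₂')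

/-- Every chain of a modular lattice with `height ⊤ = n` is finite. -/
private lemma efc_chain_finite {n : ℕ} (hrank : height (⊤:L) = n)
    {C : Set L} (hC : IsChain (· ≤ ·) C) : C.Finite := by
  classical
  have hinj : Set.InjOn (fun x => (height x).toNat) C := by
    intro x hx y hy he
    by_contra hne
    have key : ∀ u v : L, u < v → (height u).toNat = (height v).toNat → False := by
      intro u v huv heq
      have h1 : height u < height v :=
        height_strictMono huv (lt_top_iff_ne_top.2 (efc_height_ne_top hrank u))
      have h2 : height u = height v := by
        rw [← ENat.coe_toNat (efc_height_ne_top hrank u),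
          ← ENat.coe_toNat (efc_height_ne_top hrank v), heq]
      exact h1.ne h2
    rcases hC hx hy hne with h | h
    · exact key x y (lt_of_le_of_ne h hne) he
    · exact key y x (lt_of_le_of_ne h (Ne.symm hne)) he.symm
  have himg : ((fun x => (height x).toNat) '' C).Finite := by
    apply Set.Finite.subset (Set.finite_Iic n)
    rintro - ⟨x, -, rfl⟩
    have hle := efc_height_le hrank x
    simpa [Set.mem_Iic] using ENat.toNat_le_of_le_coe hle
  exact Set.Finite.of_finite_image himg hinj

/-- Every chain extends to a graded maximal chain `⊥ = c 0 ⋖ c 1 ⋖ ⋯ ⋖ c n = ⊤`. -/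
private lemma efc_exists_graded_chain {n : ℕ} (hrank : height (⊤:L) = n)
    (C : Set L) (hC : IsChain (· ≤ ·) C) :
    ∃ c : ℕ → L, c 0 = ⊥ ∧ c n = ⊤ ∧ (∀ k < n, c k ⋖ c (k+1)) ∧
      ∀ x ∈ C, ∃ k ≤ n, x = c k := by
  classical
  set C' : Set L := insert ⊥ (insert ⊤ C) with hC'
  have hC'chain : IsChain (· ≤ ·) C' := by
    refine IsChain.insert (IsChain.insert hC ?_) ?_
    · intro b _ _; exact Or.inr le_top
    · intro b _ _; exact Or.inl bot_le
  have hC'fin : C'.Finite := ((efc_chain_finite hrank hC).insert ⊤).insert ⊥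
  set F : Finset L := hC'fin.toFinset with hF
  have hFc : (F : Set L) = C' := hC'fin.coe_toFinset
  obtain ⟨s, hs, hsmem⟩ := efc_exists_sorted_list F (by rw [hFc]; exact hC'chain)
  have hmem' : ∀ x, x ∈ s ↔ x ∈ C' := by
    intro x; rw [hsmem x, ← hFc]; simp
  have hbots : (⊥ : L) ∈ s := (hmem' ⊥).2 (by simp [hC'])
  have htops : (⊤ : L) ∈ s := (hmem' ⊤).2 (by simp [hC'])
  have hsne : s ≠ [] := by intro h; rw [h] at hbots; simp at hbots
  have hshd : s.head? = some ⊥ := by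
    cases s with
    | nil => exact absurd rfl hsne
    | cons a tl =>
      have h1 : a ≤ ⊥ := efc_head_le _ hs ⊥ hbots a (by simp)
      simp [le_bot_iff.mp h1]
  have hslast : s.getLast? = some ⊤ := by
    obtain ⟨y, hy⟩ := Option.ne_none_iff_exists'.mp
      (by rw [List.getLast?_eq_getLast hsne]; simp :
        s.getLast? ≠ none)
    have h1 : (⊤ : L) ≤ y := efc_le_getLast _ hs ⊤ htops y hy
    rw [hy, top_le_iff.mp h1]
  obtain ⟨l, hlne, hlch, hlhd, hllast, hlmem⟩ := efc_chain_to_sat hrank s hs hsne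
  rw [hshd] at hlhd
  rw [hslast] at hllast
  -- heights along the saturated chain
  set N := l.length with hN
  have hNpos : 0 < N := List.length_pos_iff.mpr hlne
  have hget0 : l.get ⟨0, hNpos⟩ = ⊥ := by
    cases l with
    | nil => exact absurd rfl hlne
    | cons a tl => simpa using hlhd
  have hcov : ∀ i, ∀ hi : i + 1 < N, l.get ⟨i, by omega⟩ ⋖ l.get ⟨i+1, by omega⟩ := by
    intro i hi
    exact List.isChain_iff_getElem.mp hlch i (by omega)
  have hheights : ∀ i, (hi : i < N) → height (l.get ⟨i, hi⟩) = (i : ℕ∞) := by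
    intro i
    induction i with
    | zero => intro hi; rw [hget0]; simp
    | succ i ihh =>
      intro hi
      have hih := ihh (by omega)
      have := efc_height_covBy (hcov i hi) (by rw [hih]; exact (by simp : (i : ℕ∞) ≠ ⊤))
      rw [this, hih]
      push_cast
      ring
  have hgetlast : l.get ⟨N-1, by omega⟩ = ⊤ := by
    have h1 := List.getLast?_eq_getLast hlne
    rw [hllast] at h1
    have h2 := List.getLast_eq_getElem hlne
    have h3 : some (⊤:L) = some (l.get ⟨N-1, by omega⟩) := by rw [h1, h2]; rfl
    exact (Option.some_injective _ h3).symm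
  have hNn : N - 1 = n := by
    have := hheights (N-1) (by omega)
    rw [hgetlast, hrank] at this
    exact_mod_cast this.symm
  refine ⟨fun k => l.getD k ⊥, ?_, ?_, ?_, ?_⟩
  · show l.getD 0 ⊥ = ⊥
    rw [List.getD_eq_getElem l ⊥ (by omega : 0 < l.length)]
    exact hget0
  · show l.getD n ⊥ = ⊤
    rw [List.getD_eq_getElem l ⊥ (by omega : n < l.length)]
    have : n = N - 1 := hNn.symm
    subst this
    exact hgetlast
  · intro k hk
    have h1 : k + 1 < N := by omega
    have h2 := hcov k h1
    show l.getD k ⊥ ⋖ l.getD (k+1) ⊥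
    rwa [List.getD_eq_getElem l ⊥ (by omega : k < l.length),
      List.getD_eq_getElem l ⊥ (by omega : k + 1 < l.length)]
  · intro x hx
    have hxl : x ∈ l := hlmem x ((hmem' x).2 (by simp [hC', hx]))
    obtain ⟨⟨k, hk⟩, hkx⟩ := List.mem_iff_get.mp hxl
    refine ⟨k, by omega, ?_⟩
    show x = l.getD k ⊥
    rw [List.getD_eq_getElem l ⊥ (by omega : k < l.length), ← hkx]
    rfl

private lemma efc_mono_of_covBy {n : ℕ} {c : ℕ → L}
    (h : ∀ k < n, c k ⋖ c (k+1)) :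
    ∀ p q, p ≤ q → q ≤ n → c p ≤ c q := by
  intro p q hpq hq
  induction q with
  | zero =>
    obtain rfl : p = 0 := Nat.le_zero.mp hpq
    exact le_rfl
  | succ q ihq =>
    rcases Nat.lt_or_ge p (q+1) with hlt | hge
    · exact le_trans (ihq (by omega) (by omega)) (h q (by omega)).lt.le
    · obtain rfl : p = q + 1 := le_antisymm hpq hge
      exact le_rfl

end Chains

/-- For any two chains `C` and `D` in a complemented modular lattice `L` of rank `n`,
there exists a base `{a₁, …, aₙ}` of atoms such that the frame generated by it (the
set of joins of subsets of the base) contains both `C` and `D`. -/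
theorem exists_frame_containing_two_chains {L : Type*} [Lattice L] [BoundedOrder L]
    [IsModularLattice L] [ComplementedLattice L] {n : ℕ}
    (hrank : Order.height (⊤ : L) = n)
    (C D : Set L) (hC : IsChain (· ≤ ·) C) (hD : IsChain (· ≤ ·) D) :
    ∃ a : Fin n → L, (∀ i, IsAtom (a i)) ∧ Finset.univ.sup a = ⊤ ∧
      ∀ x ∈ C ∪ D, ∃ S : Finset (Fin n), x = S.sup a := by
  classical
  obtain ⟨c, hc0, hcn, hccov, hcmem⟩ := efc_exists_graded_chain hrank C hC
  obtain ⟨d, hd0, hdn, hdcov, hdmem⟩ := efc_exists_graded_chain hrank D hD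
  have hcmono : ∀ p q, p ≤ q → q ≤ n → c p ≤ c q := efc_mono_of_covBy hccov
  have hdmono : ∀ p q, p ≤ q → q ≤ n → d p ≤ d q := efc_mono_of_covBy hdcov
  -- the Jordan–Hölder matching
  have hPex : ∀ i, i < n → ∃ j, ¬ c (i+1) ⊓ d (j+1) ≤ c i := by
    intro i hi
    refine ⟨n-1, ?_⟩
    rw [show n-1+1 = n from by omega, hdn, inf_top_eq]
    exact fun hle => (hccov i hi).lt.not_ge hle
  set σ : ℕ → ℕ := fun i => if h : i < n then Nat.find (hPex i h) else 0 with hσdef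
  have hσspec : ∀ i, i < n → ¬ c (i+1) ⊓ d (σ i + 1) ≤ c i := by
    intro i hi
    simp only [hσdef, dif_pos hi]
    exact Nat.find_spec (hPex i hi)
  have hσmin : ∀ i, i < n → ∀ j, j < σ i → c (i+1) ⊓ d (j+1) ≤ c i := by
    intro i hi j hj
    simp only [hσdef, dif_pos hi] at hj
    exact not_not.mp (Nat.find_min (hPex i hi) hj)
  have hσlt : ∀ i, i < n → σ i < n := by
    intro i hi
    have h1 : σ i ≤ n - 1 := by
      simp only [hσdef, dif_pos hi]
      refine Nat.find_le ?_
      rw [show n-1+1 = n from by omega, hdn, inf_top_eq]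
      exact fun hle => (hccov i hi).lt.not_ge hle
    omega
  have hσ0 : ∀ i, i < n → c (i+1) ⊓ d (σ i) ≤ c i := by
    intro i hi
    rcases Nat.eq_zero_or_pos (σ i) with h0 | hpos
    · rw [h0, hd0, inf_bot_eq]; exact bot_le
    · have := hσmin i hi (σ i - 1) (by omega)
      rwa [show σ i - 1 + 1 = σ i from by omega] at this
  -- atoms
  have hatom : ∀ i, ∃ ai : L, i < n →
      IsAtom ai ∧ ai ≤ c (i+1) ∧ ai ≤ d (σ i + 1) ∧ ¬ ai ≤ c i ∧ ¬ ai ≤ d (σ i) := by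
    intro i
    by_cases hi : i < n
    swap
    · exact ⟨⊥, fun h => absurd h hi⟩
    set u := c (i+1) ⊓ d (σ i + 1) with hu
    set v := c i ⊓ d (σ i + 1) with hv
    have hvleu : v ≤ u := inf_le_inf_right _ (hccov i hi).lt.le
    have hune : ¬ u ≤ c i := hσspec i hi
    have hcsup : c i ⊔ u = c (i+1) := by
      have h1 : c i < c i ⊔ u :=
        lt_of_le_of_ne le_sup_left (fun he => hune (sup_eq_left.mp he.symm))
      have h2 : c i ⊔ u ≤ c (i+1) := sup_le (hccov i hi).lt.le inf_le_left
      rcases h2.lt_or_eq with hl | he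
      · exact absurd hl ((hccov i hi).2 h1)
      · exact he
    have hciu : c i ⊓ u = v := by
      rw [hu, hv, ← inf_assoc, inf_eq_left.mpr (hccov i hi).lt.le]
    have hvcu : v ⋖ u := by
      have := inf_covBy_of_covBy_sup_left (a := c i) (b := u)
        (by rw [hcsup]; exact hccov i hi)
      rwa [hciu] at this
    obtain ⟨w, hw⟩ := exists_isCompl (⟨v, hvcu.lt.le⟩ : Set.Iic u)
    set a' : L := (w : L) with ha'
    have ha'u : a' ≤ u := w.2
    have hsup' : v ⊔ a' = u := by
      have h1 := hw.sup_eq_top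
      have h2 := congrArg (Subtype.val) h1
      simpa using h2
    have hinf' : v ⊓ a' = ⊥ := by
      have h1 := hw.inf_eq_bot
      have h2 := congrArg (Subtype.val) h1
      simpa using h2
    have hba : ⊥ ⋖ a' := by
      have := inf_covBy_of_covBy_sup_left (a := v) (b := a')
        (by rw [hsup']; exact hvcu)
      rwa [hinf'] at this
    have hat : IsAtom a' := bot_covBy_iff.mp hba
    have ha'c : a' ≤ c (i+1) := le_trans ha'u inf_le_left
    have ha'd : a' ≤ d (σ i + 1) := le_trans ha'u inf_le_right
    have hinfc : a' ⊓ c i ≤ ⊥ := by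
      have h1 : a' ⊓ c i ≤ v := le_inf inf_le_right (le_trans inf_le_left ha'd)
      calc a' ⊓ c i ≤ a' ⊓ v := le_inf inf_le_left h1
        _ = v ⊓ a' := inf_comm a' v
        _ = ⊥ := hinf'
    have hinfd : a' ⊓ d (σ i) ≤ ⊥ := by
      have h1 : a' ⊓ d (σ i) ≤ c i := by
        calc a' ⊓ d (σ i) ≤ c (i+1) ⊓ d (σ i) := inf_le_inf_right _ ha'c
          _ ≤ c i := hσ0 i hi
      have h2 : a' ⊓ d (σ i) ≤ v :=
        le_inf h1 (le_trans inf_le_right (hdmono (σ i) (σ i + 1) (by omega) (hσlt i hi)))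
      calc a' ⊓ d (σ i) ≤ a' ⊓ v := le_inf inf_le_left h2
        _ = v ⊓ a' := inf_comm a' v
        _ = ⊥ := hinf'
    refine ⟨a', fun _ => ⟨hat, ha'c, ha'd, ?_, ?_⟩⟩
    · intro hle
      exact hat.1 (le_bot_iff.mp (le_trans (le_inf le_rfl hle) hinfc))
    · intro hle
      exact hat.1 (le_bot_iff.mp (le_trans (le_inf le_rfl hle) hinfd))
  choose A hA using hatom
  -- surjectivity of the matching
  have hsurj : ∀ k, k < n → ∃ i, i < n ∧ σ i = k := by
    intro k hk
    have hRex : ∃ i, d (k+1) ≤ c (i+1) ⊔ d k := by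
      refine ⟨n-1, ?_⟩
      rw [show n-1+1 = n from by omega, hcn, top_sup_eq]
      exact le_top
    set i₀ := Nat.find hRex with hi0
    have hR : d (k+1) ≤ c (i₀+1) ⊔ d k := Nat.find_spec hRex
    have hi₀n : i₀ < n := by
      have h1 : i₀ ≤ n - 1 := Nat.find_le (by
        rw [show n-1+1 = n from by omega, hcn, top_sup_eq]; exact le_top)
      omega
    have hnR : ¬ d (k+1) ≤ c i₀ ⊔ d k := by
      rcases Nat.eq_zero_or_pos i₀ with h0 | hpos
      · rw [h0, hc0, bot_sup_eq]
        exact fun hle => (hdcov k hk).lt.not_ge hle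
      · have := Nat.find_min hRex (show i₀ - 1 < i₀ from by omega)
        rwa [show i₀ - 1 + 1 = i₀ from by omega] at this
    have hQ : ¬ c (i₀+1) ⊓ d (k+1) ≤ c i₀ := by
      intro hle
      apply hnR
      have h1 : d (k+1) = d (k+1) ⊓ (c (i₀+1) ⊔ d k) := (inf_eq_left.mpr hR).symm
      rw [h1, ← inf_sup_assoc_of_le _ (hdmono k (k+1) (by omega) (by omega))]
      refine sup_le_sup_right ?_ _
      rw [inf_comm]
      exact hle
    have hQ' : ∀ j, j < k → c (i₀+1) ⊓ d (j+1) ≤ c i₀ := by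
      intro j hj
      have hdk : c (i₀+1) ⊓ d k ≤ c i₀ := by
        by_contra hcon
        apply hnR
        have h1 : c i₀ < c i₀ ⊔ (c (i₀+1) ⊓ d k) :=
          lt_of_le_of_ne le_sup_left (fun he => hcon (sup_eq_left.mp he.symm))
        have h2 : c i₀ ⊔ (c (i₀+1) ⊓ d k) ≤ c (i₀+1) :=
          sup_le (hccov i₀ hi₀n).lt.le inf_le_left
        have heq : c i₀ ⊔ (c (i₀+1) ⊓ d k) = c (i₀+1) := by
          rcases h2.lt_or_eq with hl | he
          · exact absurd hl ((hccov i₀ hi₀n).2 h1)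
          · exact he
        calc d (k+1) ≤ c (i₀+1) ⊔ d k := hR
          _ = (c i₀ ⊔ (c (i₀+1) ⊓ d k)) ⊔ d k := by rw [heq]
          _ ≤ c i₀ ⊔ d k :=
            sup_le (sup_le le_sup_left (le_trans inf_le_right le_sup_right)) le_sup_right
      exact le_trans (inf_le_inf_left _ (hdmono (j+1) k (by omega) (by omega))) hdk
    refine ⟨i₀, hi₀n, ?_⟩
    simp only [hσdef, dif_pos hi₀n]
    rw [Nat.find_eq_iff]
    exact ⟨hQ, fun j hj => not_not_intro (hQ' j hj)⟩
  -- claim for the chain c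
  have claimC : ∀ k, k ≤ n →
      c k = (Finset.univ.filter (fun i : Fin n => i.val < k)).sup (fun i => A i.val) := by
    intro k
    induction k with
    | zero =>
      intro _
      rw [hc0]
      have h1 : (Finset.univ.filter (fun i : Fin n => i.val < 0)) = ∅ := by
        ext i; simp
      rw [h1, Finset.sup_empty]
    | succ k ihk =>
      intro hk1
      have hk : k < n := by omega
      obtain ⟨hat, hle_c, hle_d, hnle_c, hnle_d⟩ := hA k hk
      have hstep : c (k+1) = c k ⊔ A k := by
        have h1 : c k < c k ⊔ A k :=
          lt_of_le_of_ne le_sup_left (fun he => hnle_c (sup_eq_left.mp he.symm))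
        have h2 : c k ⊔ A k ≤ c (k+1) := sup_le (hccov k hk).lt.le hle_c
        rcases h2.lt_or_eq with hl | he
        · exact absurd hl ((hccov k hk).2 h1)
        · exact he.symm
      have hfilter : (Finset.univ.filter (fun i : Fin n => i.val < k+1)) =
          insert ⟨k, hk⟩ (Finset.univ.filter (fun i : Fin n => i.val < k)) := by
        ext i
        simp only [Finset.mem_filter, Finset.mem_insert, Finset.mem_univ, true_and,
          Fin.ext_iff]
        omega
      rw [hfilter, Finset.sup_insert, hstep, ihk (by omega), sup_comm]
  -- claim for the chain d
  have claimD : ∀ k, k ≤ n →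
      d k = (Finset.univ.filter (fun i : Fin n => σ i.val < k)).sup (fun i => A i.val) := by
    intro k
    induction k with
    | zero =>
      intro _
      rw [hd0]
      have h1 : (Finset.univ.filter (fun i : Fin n => σ i.val < 0)) = ∅ := by
        ext i; simp
      rw [h1, Finset.sup_empty]
    | succ k ihk =>
      intro hk1
      have hk : k < n := by omega
      obtain ⟨i₀, hi₀, hσi₀⟩ := hsurj k hk
      obtain ⟨hat, hle_c, hle_d, hnle_c, hnle_d⟩ := hA i₀ hi₀
      rw [hσi₀] at hle_d hnle_d
      have hstep : d (k+1) = d k ⊔ A i₀ := by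
        have h1 : d k < d k ⊔ A i₀ :=
          lt_of_le_of_ne le_sup_left (fun he => hnle_d (sup_eq_left.mp he.symm))
        have h2 : d k ⊔ A i₀ ≤ d (k+1) := sup_le (hdcov k hk).lt.le hle_d
        rcases h2.lt_or_eq with hl | he
        · exact absurd hl ((hdcov k hk).2 h1)
        · exact he.symm
      apply le_antisymm
      · rw [hstep]
        refine sup_le ?_ ?_
        · rw [ihk (by omega)]
          refine Finset.sup_mono ?_
          intro i hi
          simp only [Finset.mem_filter, Finset.mem_univ, true_and] at hi ⊢
          omega
        · have hmem2 : (⟨i₀, hi₀⟩ : Fin n) ∈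
              Finset.univ.filter (fun i : Fin n => σ i.val < k+1) := by
            simp only [Finset.mem_filter, Finset.mem_univ, true_and]
            show σ i₀ < k + 1
            omega
          exact Finset.le_sup (f := fun i : Fin n => A i.val) hmem2
      · refine Finset.sup_le ?_
        intro i hi
        simp only [Finset.mem_filter, Finset.mem_univ, true_and] at hi
        obtain ⟨hat', hle_c', hle_d', -, -⟩ := hA i.val i.isLt
        exact le_trans hle_d' (hdmono (σ i.val + 1) (k+1) (by omega) (by omega))
  refine ⟨fun i => A i.val, fun i => (hA i.val i.isLt).1, ?_, ?_⟩
  · have h1 := claimC n le_rfl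
    rw [hcn] at h1
    have h2 : (Finset.univ.filter (fun i : Fin n => i.val < n)) = Finset.univ := by
      ext i; simp [i.isLt]
    rw [h2] at h1
    exact h1.symm
  · rintro x (hx | hx)
    · obtain ⟨k, hk, rfl⟩ := hcmem x hx
      exact ⟨_, claimC k hk⟩
    · obtain ⟨k, hk, rfl⟩ := hdmem x hx
      exact ⟨_, claimD k hk⟩
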